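/- In the monoid M_B presented by the generators [x,y] for x ⊆ y in the poset P_B = (𝒫({1,2,3,4}) ∖ {∅, {1,2,3,4}}, ⊆), subject to all interval-monoid relations [x,z]=[x,y][y,z] for x ⊆ y ⊆ z except the single relation [{1},{1,2}][{1,2},{1,2,3}] = [{1},{1,3}][{1,3},{1,2,3}], the deleted relation nevertheless holds in the enveloping group of M_B; consequently M_B does not embed into its enveloping group. -/

import Mathlib

/-! Common definitions: multifractions, divisibility, interval monoids, zigzags. -/

section Defs

variable {M : Type*}

/-- A multifraction on a monoid `M`: a finite sequence with entries alternately in `M`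
(sign `true`) and in a formal disjoint copy of `M` (sign `false`). -/
structure Multifraction (M : Type*) [Monoid M] where
  entries : List (Bool × M)
  alt : entries.Chain' fun p q => p.1 ≠ q.1

/-- The product of two multifraction entry lists: merge the adjacent entries when they have
the same sign, concatenate otherwise. -/
def mfMul [Monoid M] (l₁ l₂ : List (Bool × M)) : List (Bool × M) :=
  match l₁.getLast?, l₂ with
  | some (b, x), (c, y) :: t =>
      if b = c then l₁.dropLast ++ (b, if b then x * y else y * x) :: t else l₁ ++ l₂
  | _, _ => l₁ ++ l₂

/-- The one-entry positive multifraction. -/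
def mfPos [Monoid M] (x : M) : Multifraction M := ⟨[(true, x)], List.isChain_singleton _⟩

/-- The one-entry negative multifraction. -/
def mfNeg [Monoid M] (x : M) : Multifraction M := ⟨[(false, x)], List.isChain_singleton _⟩

/-- `a` left divides `b`. -/
def LDvd [Monoid M] (a b : M) : Prop := ∃ c, a * c = b

/-- `a` right divides `b`. -/
def RDvd [Monoid M] (a b : M) : Prop := ∃ c, c * a = b

/-- `M` is (left and right) cancellative. -/
def Cancellative (M : Type*) [Monoid M] : Prop :=
  (∀ a b c : M, a * b = a * c → b = c) ∧ (∀ a b c : M, b * a = c * a → b = c)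

/-- `1` is the only invertible element of `M`. -/
def TrivialUnits (M : Type*) [Monoid M] : Prop := ∀ a : M, IsUnit a → a = 1

/-- Any two elements admit a left gcd. -/
def HasLeftGcds (M : Type*) [Monoid M] : Prop :=
  ∀ a b : M, ∃ d, LDvd d a ∧ LDvd d b ∧ ∀ e, LDvd e a → LDvd e b → LDvd e d

/-- Any two elements admit a right gcd. -/
def HasRightGcds (M : Type*) [Monoid M] : Prop :=
  ∀ a b : M, ∃ d, RDvd d a ∧ RDvd d b ∧ ∀ e, RDvd e a → RDvd e b → RDvd e d

/-- `M` is a gcd-monoid. -/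
def GcdMonoidProp (M : Type*) [Monoid M] : Prop :=
  Cancellative M ∧ TrivialUnits M ∧ HasLeftGcds M ∧ HasRightGcds M

/-- `m` is a right lcm of `u` and `v`. -/
def IsRightLcm [Monoid M] (u v m : M) : Prop :=
  LDvd u m ∧ LDvd v m ∧ ∀ w, LDvd u w → LDvd v w → LDvd m w

/-- `m` is a left lcm of `u` and `v`. -/
def IsLeftLcm [Monoid M] (u v m : M) : Prop :=
  RDvd u m ∧ RDvd v m ∧ ∀ w, RDvd u w → RDvd v w → RDvd m w

/-- `M` is a noetherian monoid: cancellative, with trivial units, and with well-founded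
proper left and right divisibility. -/
def NoetherianMonoid (M : Type*) [Monoid M] : Prop :=
  Cancellative M ∧ TrivialUnits M ∧
    WellFounded (fun a b : M => LDvd a b ∧ a ≠ b) ∧
    WellFounded (fun a b : M => RDvd a b ∧ a ≠ b)

/-- An atom of a monoid. -/
def MonAtom [Monoid M] (a : M) : Prop :=
  a ≠ 1 ∧ ∀ b c : M, a = b * c → b = 1 ∨ c = 1

/-- `η : M →* G` exhibits `G` as the enveloping (universal) group of `M`. -/
def IsEnvelopingGroup (M : Type*) [Monoid M] (G : Type*) [Group G] (η : M →* G) : Prop :=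
  ∀ (H : Type*) [Group H] (f : M →* H), ∃! g : G →* H, g.comp η = f

/-- Evaluation of a multifraction in a group `G` through `η : M →* G`. -/
def mfEval [Monoid M] {G : Type*} [Group G] (η : M →* G) (a : Multifraction M) : G :=
  (a.entries.map fun p => if p.1 then η p.2 else (η p.2)⁻¹).prod

/-- A multifraction is trivial if all its entries equal `1`. -/
def MfTrivial [Monoid M] (a : Multifraction M) : Prop := ∀ p ∈ a.entries, p.2 = 1

/-- `a` is a proper piece of `b` (relative to a monoid structure on multifractions). -/
def Piece [Monoid M] [Monoid (Multifraction M)] (a b : Multifraction M) : Prop :=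
  ∃ c d : Multifraction M, b = c * a * d ∧ ¬(MfTrivial c ∧ MfTrivial d)

/-- The `j`-th entry of a multifraction (with default `(true, 1)`). -/
def mfEntry [Monoid M] (a : Multifraction M) (j : ℕ) : Bool × M :=
  (a.entries[j]?).getD (true, 1)

/-- The reduction rule `R_{i,x}` (here `j = i - 1` is the 0-based level):
`b = a • R_{i,x}`. -/
def RedAt [Monoid M] (a b : Multifraction M) (j : ℕ) (x : M) : Prop :=
  b.entries.length = a.entries.length ∧ j + 1 < a.entries.length ∧
  (∀ k, ¬(j - 1 ≤ k ∧ k ≤ j + 1) → b.entries[k]? = a.entries[k]?) ∧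
  (∀ k, (mfEntry b k).1 = (mfEntry a k).1) ∧
  (if (mfEntry a j).1 then
     if j = 0 then
       (mfEntry b 0).2 * x = (mfEntry a 0).2 ∧ (mfEntry b 1).2 * x = (mfEntry a 1).2
     else ∃ x' : M,
       (mfEntry b (j - 1)).2 = x' * (mfEntry a (j - 1)).2 ∧
       (mfEntry b j).2 * x = x' * (mfEntry a j).2 ∧
       IsLeftLcm x (mfEntry a j).2 ((mfEntry b j).2 * x) ∧
       (mfEntry b (j + 1)).2 * x = (mfEntry a (j + 1)).2
   else
     if j = 0 then
       x * (mfEntry b 0).2 = (mfEntry a 0).2 ∧ x * (mfEntry b 1).2 = (mfEntry a 1).2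
     else ∃ x' : M,
       (mfEntry b (j - 1)).2 = (mfEntry a (j - 1)).2 * x' ∧
       x * (mfEntry b j).2 = (mfEntry a j).2 * x' ∧
       IsRightLcm x (mfEntry a j).2 (x * (mfEntry b j).2) ∧
       x * (mfEntry b (j + 1)).2 = (mfEntry a (j + 1)).2)

/-- One reduction step. -/
def Reduces [Monoid M] (a b : Multifraction M) : Prop := ∃ j x, x ≠ 1 ∧ RedAt a b j x

/-- A multifraction is reducible if some rule `R_{i,x}` with `x ≠ 1` applies to it. -/
def Reducible [Monoid M] (a : Multifraction M) : Prop := ∃ b, Reduces a b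

/-- Iterated reduction. -/
def ReducesStar [Monoid M] : Multifraction M → Multifraction M → Prop :=
  Relation.ReflTransGen Reduces

/-- Semi-convergence of reduction (relative to an enveloping group `η : M →* G`):
every unital multifraction reduces to a trivial one. -/
def SemiConvergent [Monoid M] {G : Type*} [Group G] (η : M →* G) : Prop :=
  ∀ a : Multifraction M, mfEval η a = 1 → ∃ b, ReducesStar a b ∧ MfTrivial b

end Defs

section Interval

variable (P : Type*) [PartialOrder P]

/-- The intervals of a poset `P`. -/
def Iv := {p : P × P // p.1 ≤ p.2}

/-- The defining relations of the interval monoid of `P`. -/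
def intervalRel : FreeMonoid (Iv P) → FreeMonoid (Iv P) → Prop := fun u v =>
  (∃ (x y z : P) (hxy : x ≤ y) (hyz : y ≤ z),
      u = FreeMonoid.of ⟨(x, z), hxy.trans hyz⟩ ∧
      v = FreeMonoid.of ⟨(x, y), hxy⟩ * FreeMonoid.of ⟨(y, z), hyz⟩) ∨
  (∃ x : P, u = FreeMonoid.of ⟨(x, x), le_refl x⟩ ∧ v = 1)

/-- The interval monoid of the poset `P`. -/
def IntervalMonoid := (conGen (intervalRel P)).Quotient

instance : Monoid (IntervalMonoid P) :=
  inferInstanceAs (Monoid (conGen (intervalRel P)).Quotient)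

variable {P}

/-- The generator `[x, y]` of the interval monoid. -/
def intv (I : Iv P) : IntervalMonoid P := (conGen (intervalRel P)).mk' (FreeMonoid.of I)

variable (P)

/-- `P` is a local lattice: each `P^{≥ x}` is a meet-semilattice and each `P^{≤ x}` is a
join-semilattice. -/
def LocalLattice : Prop :=
  (∀ x a b : P, x ≤ a → x ≤ b →
      ∃ m, x ≤ m ∧ m ≤ a ∧ m ≤ b ∧ ∀ c, x ≤ c → c ≤ a → c ≤ b → c ≤ m) ∧
  (∀ x a b : P, a ≤ x → b ≤ x →
      ∃ m, m ≤ x ∧ a ≤ m ∧ b ≤ m ∧ ∀ c, c ≤ x → a ≤ c → b ≤ c → m ≤ c)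

/-- Noetherianity conditions on the poset `P`: no infinite descending chain in any `P^{≥ x}`
and no infinite ascending chain in any `P^{≤ x}`. -/
def PosetNoethCond : Prop :=
  ∀ x : P, WellFounded (fun a b : {y : P // x ≤ y} => (a : P) < (b : P)) ∧
    WellFounded (fun a b : {y : P // y ≤ x} => (b : P) < (a : P))

variable {P}

/-- A simple multifraction on the interval monoid: each entry is a proper interval, and
consecutive entries share their target (at positive positions) or source (at negative ones). -/
def MfSimple (a : Multifraction (IntervalMonoid P)) : Prop :=
  ∃ l : List (Bool × Iv P),
    a.entries = l.map (fun p => (p.1, intv p.2)) ∧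
    (∀ p ∈ l, p.2.1.1 ≠ p.2.1.2) ∧
    l.Chain' fun p q => if p.1 then p.2.1.2 = q.2.1.2 else p.2.1.1 = q.2.1.1

/-- A positive `n`-zigzag in `P`. -/
def PosZigzag (n : ℕ) (x : ℕ → P) : Prop :=
  ∀ i ≤ n, i % 2 = 0 → (1 ≤ i → x i < x (i - 1)) ∧ (i < n → x i < x (i + 1))

/-- A negative `n`-zigzag in `P`. -/
def NegZigzag (n : ℕ) (x : ℕ → P) : Prop :=
  ∀ i ≤ n, i % 2 = 1 → (1 ≤ i → x i < x (i - 1)) ∧ (i < n → x i < x (i + 1))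

/-- The zigzag `x` is simple: `x₁, ..., xₙ` are pairwise distinct. -/
def SimpleZz (n : ℕ) (x : ℕ → P) : Prop :=
  ∀ i j, 1 ≤ i → i < j → j ≤ n → x i ≠ x j

/-- Reducibility of a zigzag at level `i`. -/
def ZzRedAt (n : ℕ) (x : ℕ → P) (i : ℕ) : Prop :=
  1 ≤ i ∧ i < n ∧
  ((2 ≤ i ∧ x i < x (i + 1) ∧
      ∃ y, x i < y ∧ y ≤ x (i + 1) ∧ ∃ u, x (i - 1) ≤ u ∧ y ≤ u) ∨
   (2 ≤ i ∧ x (i + 1) < x i ∧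
      ∃ y, x (i + 1) ≤ y ∧ y < x i ∧ ∃ u, u ≤ x (i - 1) ∧ u ≤ y) ∨
   (i = 1 ∧ x 0 < x 1 ∧ ∃ y, x 0 ≤ y ∧ y < x 1 ∧ x 2 ≤ y) ∨
   (i = 1 ∧ x 1 < x 0 ∧ ∃ y, x 1 < y ∧ y ≤ x 0 ∧ y ≤ x 2))

/-- A zigzag is reducible if it is reducible at some level. -/
def ZzReducible (n : ℕ) (x : ℕ → P) : Prop := ∃ i, ZzRedAt n x i

/-- The multifraction `a` is the image of the positive `n`-zigzag `x` under the map `F`. -/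
def PosImage (n : ℕ) (x : ℕ → P) (a : Multifraction (IntervalMonoid P)) : Prop :=
  a.entries.length = n ∧ ∀ j < n,
    if j % 2 = 0 then
      ∃ h : x j ≤ x (j + 1), a.entries[j]? = some (true, intv ⟨(x j, x (j + 1)), h⟩)
    else
      ∃ h : x (j + 1) ≤ x j, a.entries[j]? = some (false, intv ⟨(x (j + 1), x j), h⟩)

/-- The multifraction `a` is the image of the negative `n`-zigzag `x` under the map `F`. -/
def NegImage (n : ℕ) (x : ℕ → P) (a : Multifraction (IntervalMonoid P)) : Prop :=
  a.entries.length = n ∧ ∀ j < n,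
    if j % 2 = 0 then
      ∃ h : x (j + 1) ≤ x j, a.entries[j]? = some (false, intv ⟨(x (j + 1), x j), h⟩)
    else
      ∃ h : x j ≤ x (j + 1), a.entries[j]? = some (true, intv ⟨(x j, x (j + 1)), h⟩)

end Interval

section PropB

/-- The poset `P_B` of proper nonempty subsets of a 4-element set, under inclusion. -/
def PB : Type := {S : Finset (Fin 4) // S.Nonempty ∧ S ≠ Finset.univ}

instance : PartialOrder PB := inferInstanceAs (PartialOrder {S : Finset (Fin 4) // _})

/-- The element `{1}` of `P_B`. -/
def s1 : PB := ⟨{1}, by decide⟩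
/-- The element `{1,2}` of `P_B`. -/
def s12 : PB := ⟨{1, 2}, by decide⟩
/-- The element `{1,3}` of `P_B`. -/
def s13 : PB := ⟨{1, 3}, by decide⟩
/-- The element `{1,2,3}` of `P_B`. -/
def s123 : PB := ⟨{1, 2, 3}, by decide⟩

lemma h1_12 : s1 ≤ s12 := Subtype.mk_le_mk.mpr (by decide)
lemma h1_13 : s1 ≤ s13 := Subtype.mk_le_mk.mpr (by decide)
lemma h12_123 : s12 ≤ s123 := Subtype.mk_le_mk.mpr (by decide)
lemma h13_123 : s13 ≤ s123 := Subtype.mk_le_mk.mpr (by decide)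

/-- The defining relations of `M_B`: all interval relations of `P_B`, except that the
chains `{1} ⊆ {1,2} ⊆ {1,2,3}` and `{1} ⊆ {1,3} ⊆ {1,2,3}` (whence the relation
`[{1},{1,2}][{1,2},{1,2,3}] = [{1},{1,3}][{1,3},{1,2,3}]`) are deleted. -/
def mbRel : FreeMonoid (Iv PB) → FreeMonoid (Iv PB) → Prop := fun u v =>
  (∃ (x y z : PB) (hxy : x ≤ y) (hyz : y ≤ z),
      ¬(x = s1 ∧ z = s123 ∧ (y = s12 ∨ y = s13)) ∧
      u = FreeMonoid.of ⟨(x, z), hxy.trans hyz⟩ ∧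
      v = FreeMonoid.of ⟨(x, y), hxy⟩ * FreeMonoid.of ⟨(y, z), hyz⟩) ∨
  (∃ x : PB, u = FreeMonoid.of ⟨(x, x), le_refl x⟩ ∧ v = 1)

/-- The monoid `M_B`. -/
def MB : Type := (conGen mbRel).Quotient

instance : Monoid MB := inferInstanceAs (Monoid (conGen mbRel).Quotient)

/-- The generators of `M_B`. -/
def mbGen (I : Iv PB) : MB := (conGen mbRel).mk' (FreeMonoid.of I)


section AuxPropB

instance : DecidableEq PB := inferInstanceAs (DecidableEq {S : Finset (Fin 4) // _})
instance : Fintype PB := inferInstanceAs (Fintype {S : Finset (Fin 4) // _})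
instance (a b : PB) : Decidable (a ≤ b) := inferInstanceAs (Decidable (a.1 ⊆ b.1))
instance (a b : PB) : Decidable (a < b) := inferInstanceAs (Decidable (a.1 ⊆ b.1 ∧ ¬b.1 ⊆ a.1))

def s2 : PB := ⟨{2}, by decide⟩
def s3 : PB := ⟨{3}, by decide⟩
def s4 : PB := ⟨{4}, by decide⟩
def s14 : PB := ⟨{1, 4}, by decide⟩
def s23 : PB := ⟨{2, 3}, by decide⟩
def s24 : PB := ⟨{2, 4}, by decide⟩
def s34 : PB := ⟨{3, 4}, by decide⟩
def s124 : PB := ⟨{1, 2, 4}, by decide⟩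
def s134 : PB := ⟨{1, 3, 4}, by decide⟩
def s234 : PB := ⟨{2, 3, 4}, by decide⟩

/-- States for a separating action of `M_B`. -/
inductive SB : Type
  | zero | unit | d | c12 | c13 | mor (x y : PB)
deriving DecidableEq

instance : Fintype SB := derive_fintype% SB

def cls (x y : PB) : SB := if x = s1 ∧ y = s123 then SB.d else SB.mor x y

def cmp3 (u x y : PB) : SB :=
  if u = s1 ∧ y = s123 then (if x = s12 then SB.c12 else if x = s13 then SB.c13 else SB.zero)
  else SB.mor u y

def act (u v : PB) : SB → SB := fun s =>
  if u = v then s else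
  match s with
  | SB.unit => cls u v
  | SB.mor x y => if x < y ∧ ¬(x = s1 ∧ y = s123) ∧ v = x then cmp3 u x y else SB.zero
  | _ => SB.zero

set_option maxHeartbeats 4000000 in
set_option maxRecDepth 100000 in
lemma act_rel : ∀ x y z : PB, x ≤ y → y ≤ z →
    ¬(x = s1 ∧ z = s123 ∧ (y = s12 ∨ y = s13)) →
    ∀ s : SB, act x z s = act x y (act y z s) := by decide

/-- The free lift of the action. -/
def phiF : FreeMonoid (Iv PB) →* Function.End SB :=
  FreeMonoid.lift fun I => act I.1.1 I.1.2

lemma phiF_rel : ∀ u v, mbRel u v → phiF u = phiF v := by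
  rintro u v (⟨x, y, z, hxy, hyz, hno, rfl, rfl⟩ | ⟨x, rfl, rfl⟩)
  · rw [map_mul]
    simp only [phiF, FreeMonoid.lift_eval_of]
    funext s
    exact act_rel x y z hxy hyz hno s
  · rw [map_one]
    simp only [phiF, FreeMonoid.lift_eval_of]
    funext s
    exact if_pos rfl

/-- The separating homomorphism out of `M_B`. -/
def psiB : MB →* Function.End SB :=
  Con.lift _ phiF (Con.conGen_le.mpr fun u v h => (Con.ker_rel phiF).mpr (phiF_rel u v h))

lemma psiB_gen (I : Iv PB) : psiB (mbGen I) = act I.1.1 I.1.2 := by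
  rfl

lemma mb_rel (x y z : PB) (hxy : x ≤ y) (hyz : y ≤ z)
    (hno : ¬(x = s1 ∧ z = s123 ∧ (y = s12 ∨ y = s13))) :
    mbGen ⟨(x, z), hxy.trans hyz⟩ = mbGen ⟨(x, y), hxy⟩ * mbGen ⟨(y, z), hyz⟩ := by
  exact (Con.eq _).mpr (ConGen.Rel.of _ _ (Or.inl ⟨x, y, z, hxy, hyz, hno, rfl, rfl⟩))

lemma mb_ne : mbGen ⟨(s1, s12), h1_12⟩ * mbGen ⟨(s12, s123), h12_123⟩ ≠
    mbGen ⟨(s1, s13), h1_13⟩ * mbGen ⟨(s13, s123), h13_123⟩ := by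
  intro h
  have h2 := congrArg psiB h
  rw [map_mul, map_mul] at h2
  have h3 : act s1 s12 (act s12 s123 SB.unit) = act s1 s13 (act s13 s123 SB.unit) :=
    congrFun h2 SB.unit
  exact absurd h3 (by decide)

/-- Image of a generator in a group. -/
def gel {G : Type*} [Group G] (η : MB →* G) (x y : PB) (h : x ≤ y) : G :=
  η (mbGen ⟨(x, y), h⟩)

lemma group_eq {G : Type*} [Group G] (η : MB →* G) :
    gel η s1 s12 h1_12 * gel η s12 s123 h12_123 =
      gel η s1 s13 h1_13 * gel η s13 s123 h13_123 := by
  have k : ∀ (x y z : PB) (hxy : x ≤ y) (hyz : y ≤ z) (hxz : x ≤ z),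
      ¬(x = s1 ∧ z = s123 ∧ (y = s12 ∨ y = s13)) →
      gel η x z hxz = gel η x y hxy * gel η y z hyz := by
    intro x y z hxy hyz hxz hno
    simp only [gel, ← map_mul]
    exact congrArg _ (mb_rel x y z hxy hyz hno)
  have E1 : gel η s1 s12 (by decide) = gel η s1 s124 (by decide) * (gel η s12 s124 (by decide))⁻¹ := by
    rw [k s1 s12 s124 (by decide) (by decide) (by decide) (by decide)]; group
  have E3 : gel η s12 s123 (by decide) = (gel η s2 s12 (by decide))⁻¹ * gel η s2 s123 (by decide) := by
    rw [k s2 s12 s123 (by decide) (by decide) (by decide) (by decide)]; group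
  have E15 : gel η s1 s13 (by decide) = gel η s1 s134 (by decide) * (gel η s13 s134 (by decide))⁻¹ := by
    rw [k s1 s13 s134 (by decide) (by decide) (by decide) (by decide)]; group
  have E21 : gel η s13 s123 (by decide) = (gel η s3 s13 (by decide))⁻¹ * gel η s3 s123 (by decide) := by
    rw [k s3 s13 s123 (by decide) (by decide) (by decide) (by decide)]; group
  have E6 : gel η s1 s124 (by decide) = gel η s1 s14 (by decide) * gel η s14 s124 (by decide) := k s1 s14 s124 (by decide) (by decide) (by decide) (by decide)
  have E2 : gel η s12 s124 (by decide) = (gel η s2 s12 (by decide))⁻¹ * gel η s2 s124 (by decide) := by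
    rw [k s2 s12 s124 (by decide) (by decide) (by decide) (by decide)]; group
  have E4 : gel η s2 s123 (by decide) = gel η s2 s23 (by decide) * gel η s23 s123 (by decide) := k s2 s23 s123 (by decide) (by decide) (by decide) (by decide)
  have E18 : gel η s1 s134 (by decide) = gel η s1 s14 (by decide) * gel η s14 s134 (by decide) := k s1 s14 s134 (by decide) (by decide) (by decide) (by decide)
  have E16 : gel η s13 s134 (by decide) = (gel η s3 s13 (by decide))⁻¹ * gel η s3 s134 (by decide) := by
    rw [k s3 s13 s134 (by decide) (by decide) (by decide) (by decide)]; group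
  have E17 : gel η s3 s134 (by decide) = gel η s3 s34 (by decide) * gel η s34 s134 (by decide) := k s3 s34 s134 (by decide) (by decide) (by decide) (by decide)
  have E22 : gel η s3 s123 (by decide) = gel η s3 s23 (by decide) * gel η s23 s123 (by decide) := k s3 s23 s123 (by decide) (by decide) (by decide) (by decide)
  have E7 : gel η s14 s124 (by decide) = (gel η s4 s14 (by decide))⁻¹ * gel η s4 s124 (by decide) := by
    rw [k s4 s14 s124 (by decide) (by decide) (by decide) (by decide)]; group
  have E5 : gel η s2 s124 (by decide) = gel η s2 s24 (by decide) * gel η s24 s124 (by decide) := k s2 s24 s124 (by decide) (by decide) (by decide) (by decide)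
  have E11 : gel η s2 s23 (by decide) = gel η s2 s234 (by decide) * (gel η s23 s234 (by decide))⁻¹ := by
    rw [k s2 s23 s234 (by decide) (by decide) (by decide) (by decide)]; group
  have E19 : gel η s14 s134 (by decide) = (gel η s4 s14 (by decide))⁻¹ * gel η s4 s134 (by decide) := by
    rw [k s4 s14 s134 (by decide) (by decide) (by decide) (by decide)]; group
  have E13 : gel η s3 s34 (by decide) = gel η s3 s234 (by decide) * (gel η s34 s234 (by decide))⁻¹ := by
    rw [k s3 s34 s234 (by decide) (by decide) (by decide) (by decide)]; group
  have E14 : gel η s3 s23 (by decide) = gel η s3 s234 (by decide) * (gel η s23 s234 (by decide))⁻¹ := by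
    rw [k s3 s23 s234 (by decide) (by decide) (by decide) (by decide)]; group
  have E8 : gel η s4 s124 (by decide) = gel η s4 s24 (by decide) * gel η s24 s124 (by decide) := k s4 s24 s124 (by decide) (by decide) (by decide) (by decide)
  have E10 : gel η s2 s24 (by decide) = gel η s2 s234 (by decide) * (gel η s24 s234 (by decide))⁻¹ := by
    rw [k s2 s24 s234 (by decide) (by decide) (by decide) (by decide)]; group
  have E20 : gel η s4 s134 (by decide) = gel η s4 s34 (by decide) * gel η s34 s134 (by decide) := k s4 s34 s134 (by decide) (by decide) (by decide) (by decide)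
  have E9 : gel η s4 s24 (by decide) = gel η s4 s234 (by decide) * (gel η s24 s234 (by decide))⁻¹ := by
    rw [k s4 s24 s234 (by decide) (by decide) (by decide) (by decide)]; group
  have E12 : gel η s4 s34 (by decide) = gel η s4 s234 (by decide) * (gel η s34 s234 (by decide))⁻¹ := by
    rw [k s4 s34 s234 (by decide) (by decide) (by decide) (by decide)]; group
  rw [E1,E3,E15,E21,E6,E2,E4,E18,E16,E17,E22,E7,E5,E11,E19,E13,E14,E8,E10,E20,E9,E12]
  group


end AuxPropB

/-- The deleted relation holds in the enveloping group of `M_B`; consequently `M_B` does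
not embed into its enveloping group. -/
theorem propB :
    ∀ (G : Type*) [Group G] (η : MB →* G), IsEnvelopingGroup MB G η →
      η (mbGen ⟨(s1, s12), h1_12⟩ * mbGen ⟨(s12, s123), h12_123⟩) =
        η (mbGen ⟨(s1, s13), h1_13⟩ * mbGen ⟨(s13, s123), h13_123⟩) ∧
      ¬Function.Injective η := by
  intro G _ η _
  refine ⟨?_, fun hinj => mb_ne (hinj ?_)⟩ <;>
    · rw [map_mul, map_mul]
      exact group_eq η


end PropB
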